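/- Chain factorization: Let G be a finite directed graph without circuits, c a chain of G (a directed path) with vertex set V_c, and let G_1, ..., G_k be the connected components of G \ V_c. Define the regions Ḡ_i as the induced subgraphs on G_i ∪ V_c. Then N(G) = ∏_{j=1}^k N(Ḡ_j). -/

import Mathlib

open scoped BigOperators

/-- The field of rational functions in variables indexed by `V` over `ℚ`. -/
abbrev K (V : Type) : Type := FractionRing (MvPolynomial V ℚ)

/-- The variable `x_v` seen inside the field of rational functions. -/
noncomputable def xv {V : Type} (v : V) : K V :=
  algebraMap (MvPolynomial V ℚ) (K V) (MvPolynomial.X v)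

/-- `ψ_w = 1 / ∏ (x_{w_i} - x_{w_{i+1}})` for a word `w`. -/
noncomputable def psi {V : Type} (w : List V) : K V :=
  (((w.zip w.tail).map fun p => xv p.1 - xv p.2).prod)⁻¹

/-- The word (list of vertices) associated to an enumeration `σ` of the vertex set `W`. -/
def wordOf {V : Type} (W : Finset V) (σ : Fin W.card ≃ W) : List V :=
  (List.finRange W.card).map fun i => ((σ i : W) : V)

/-- `σ` enumerates `W` in an order compatible with all edges of `E`:
the origin of every edge appears before its end. -/
def IsExt {V : Type} (W : Finset V) (E : Finset (V × V)) (σ : Fin W.card ≃ W) : Prop :=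
  ∀ e ∈ E, ∃ i j : Fin W.card, i < j ∧ ((σ i : W) : V) = e.1 ∧ ((σ j : W) : V) = e.2

instance {V : Type} [DecidableEq V] (W : Finset V) (E : Finset (V × V)) (σ : Fin W.card ≃ W) :
    Decidable (IsExt W E σ) := by unfold IsExt; exact inferInstance

/-- `Ψ(G) = Σ_{w ∈ L(G)} ψ_w`, the sum over linear extensions of the graph with
vertex set `W` and edge set `E`. -/
noncomputable def PsiG {V : Type} [DecidableEq V] (W : Finset V) (E : Finset (V × V)) : K V :=
  ∑ σ : Fin W.card ≃ W, if IsExt W E σ then psi (wordOf W σ) else 0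

/-- `N(G) = Ψ(G) ⬝ ∏_{(a,b) ∈ E} (x_a - x_b)`. -/
noncomputable def NG {V : Type} [DecidableEq V] (W : Finset V) (E : Finset (V × V)) : K V :=
  PsiG W E * ∏ e ∈ E, (xv e.1 - xv e.2)

/-- `φ(G)`, the formal sum of the linear extensions of `G` in the free abelian
group on words. -/
noncomputable def phiG {V : Type} [DecidableEq V] (W : Finset V) (E : Finset (V × V)) :
    List V →₀ ℤ :=
  ∑ σ : Fin W.card ≃ W, if IsExt W E σ then Finsupp.single (wordOf W σ) 1 else 0

/-- The graph has no directed circuit. -/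
def Acyclic {V : Type} (E : Finset (V × V)) : Prop :=
  ∀ v : V, ¬ Relation.TransGen (fun a b => (a, b) ∈ E) v v

/-- The underlying undirected simple graph of the directed graph with edge set `E`. -/
def undirected {V : Type} (E : Finset (V × V)) : SimpleGraph V :=
  SimpleGraph.fromRel fun a b => (a, b) ∈ E

/-- The cyclically-consecutive pairs of a list of vertices. -/
def cyclePairs {V : Type} [DecidableEq V] (vs : List V) : Finset (V × V) :=
  Finset.image (fun i : Fin vs.length => (vs.get i, vs.get (finRotate _ i))) Finset.univ

/-- `vs` is (the vertex list of) a cycle of the graph `E`, whose set of forward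
edges (edges traversed in their graph orientation) is `HE`. -/
def IsCycle {V : Type} [DecidableEq V] (E : Finset (V × V)) (vs : List V)
    (HE : Finset (V × V)) : Prop :=
  2 ≤ vs.length ∧ vs.Nodup ∧ HE ⊆ cyclePairs vs ∧ HE ⊆ E ∧
    ∀ p ∈ cyclePairs vs, p ∉ HE → (p.2, p.1) ∈ E

-- Part 1 : basics
set_option linter.unusedSectionVars false
variable {V : Type} [DecidableEq V]

/-- denominator product -/
noncomputable def DD (w : List V) : K V :=
  ((w.zip w.tail).map fun p => xv p.1 - xv p.2).prod

lemma psi_eq_inv (w : List V) : psi w = (DD w)⁻¹ := rfl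

lemma xv_injective : Function.Injective (xv (V := V)) := by
  intro a b h
  have h2 : Function.Injective (algebraMap (MvPolynomial V ℚ) (K V)) :=
    IsFractionRing.injective _ _
  have := h2 h
  exact MvPolynomial.X_injective this

lemma xv_sub_ne_zero {a b : V} (h : a ≠ b) : xv a - xv b ≠ 0 := by
  intro hc
  exact h (xv_injective (by linear_combination (norm := ring_nf) hc))

lemma DD_nil : DD ([] : List V) = 1 := rfl

lemma DD_single (a : V) : DD [a] = 1 := rfl

lemma DD_cons_cons (a b : V) (t : List V) :
    DD (a :: b :: t) = (xv a - xv b) * DD (b :: t) := by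
  simp [DD, List.zip]

lemma psi_nil : psi ([] : List V) = 1 := by simp [psi]

lemma psi_single (a : V) : psi [a] = 1 := by simp [psi]

lemma psi_cons_cons (a b : V) (t : List V) :
    psi (a :: b :: t) = (xv a - xv b)⁻¹ * psi (b :: t) := by
  rw [psi_eq_inv, psi_eq_inv, DD_cons_cons, mul_inv, mul_comm]

lemma DD_ne_zero {w : List V} (h : w.Nodup) : DD w ≠ 0 := by
  induction w with
  | nil => simp [DD_nil]
  | cons a t ih =>
    cases t with
    | nil => simp [DD_single]
    | cons b t' =>
      rw [DD_cons_cons]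
      have hab : a ≠ b := by
        have := h; simp [List.nodup_cons] at this; tauto
      exact mul_ne_zero (xv_sub_ne_zero hab) (ih h.of_cons)

lemma psi_ne_zero {w : List V} (h : w.Nodup) : psi w ≠ 0 := by
  rw [psi_eq_inv]; exact inv_ne_zero (DD_ne_zero h)

lemma psi_mul_DD {w : List V} (h : w.Nodup) : psi w * DD w = 1 := by
  rw [psi_eq_inv]; exact inv_mul_cancel₀ (DD_ne_zero h)

-- Part 2 : the Before relation
/-- `a` occurs before `b` in `w`. -/
def Bef (w : List V) (a b : V) : Prop :=
  ∃ l₁ l₂ l₃ : List V, w = l₁ ++ a :: (l₂ ++ b :: l₃)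

lemma Bef.mem_left {w : List V} {a b : V} (h : Bef w a b) : a ∈ w := by
  obtain ⟨l₁, l₂, l₃, rfl⟩ := h; simp

lemma Bef.mem_right {w : List V} {a b : V} (h : Bef w a b) : b ∈ w := by
  obtain ⟨l₁, l₂, l₃, rfl⟩ := h; simp

lemma Bef.prepend {w : List V} {a b : V} (l : List V) (h : Bef w a b) : Bef (l ++ w) a b := by
  obtain ⟨l₁, l₂, l₃, rfl⟩ := h; exact ⟨l ++ l₁, l₂, l₃, by simp⟩

lemma Bef.cons {w : List V} {a b : V} (c : V) (h : Bef w a b) : Bef (c :: w) a b :=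
  h.prepend [c]

lemma bef_cons_of_mem {a b : V} {w : List V} (h : b ∈ w) : Bef (a :: w) a b := by
  obtain ⟨s, t, rfl⟩ := List.append_of_mem h
  exact ⟨[], s, t, rfl⟩

lemma bef_total {w : List V} {a b : V} (ha : a ∈ w) (hb : b ∈ w) (hab : a ≠ b) :
    Bef w a b ∨ Bef w b a := by
  induction w with
  | nil => simp at ha
  | cons c t ih =>
    rcases List.mem_cons.1 ha with rfl | ha'
    · left
      exact bef_cons_of_mem (by rcases List.mem_cons.1 hb with rfl | h; exact absurd rfl hab; exact h)
    · rcases List.mem_cons.1 hb with rfl | hb'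
      · right; exact bef_cons_of_mem ha'
      · rcases ih ha' hb' with h | h
        · exact Or.inl (h.cons c)
        · exact Or.inr (h.cons c)

lemma bef_ne {w : List V} (hw : w.Nodup) {a b : V} (h : Bef w a b) : a ≠ b := by
  obtain ⟨l₁, l₂, l₃, rfl⟩ := h
  intro rfl
  simp [List.nodup_append, List.nodup_cons] at hw

lemma bef_indexOf {w : List V} (hw : w.Nodup) {a b : V} (h : Bef w a b) :
    w.idxOf a < w.idxOf b := by
  obtain ⟨u₁, u₂, u₃, hww⟩ := h
  have hx : a ∉ u₁ := by
    intro hxm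
    have hd := (List.nodup_append.1 (hww ▸ hw)).2.2
    exact hd _ hxm _ (by simp) rfl
  have hww2 : w = (u₁ ++ a :: u₂) ++ b :: u₃ := by rw [hww]; simp
  have hy : b ∉ u₁ ++ a :: u₂ := by
    intro hym
    have hd := (List.nodup_append.1 (hww2 ▸ hw)).2.2
    exact hd _ hym _ (by simp) rfl
  have h1 : w.idxOf a = u₁.length := by
    rw [hww, List.idxOf_append_of_notMem hx]; simp
  have h2 : w.idxOf b = u₁.length + 1 + u₂.length := by
    rw [hww2, List.idxOf_append_of_notMem hy]
    simp [List.length_append]; ring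
  omega

lemma bef_antisymm {w : List V} (hw : w.Nodup) {a b : V} (h1 : Bef w a b) : ¬ Bef w b a := by
  intro h2
  have := bef_indexOf hw h1
  have := bef_indexOf hw h2
  omega

lemma indexOf_bef {w : List V} (hw : w.Nodup) {a b : V} (ha : a ∈ w) (hb : b ∈ w)
    (h : w.idxOf a < w.idxOf b) : Bef w a b := by
  have hab : a ≠ b := by rintro rfl; omega
  rcases bef_total ha hb hab with h' | h'
  · exact h'
  · exact absurd (bef_indexOf hw h') (by omega)

lemma bef_trans {w : List V} (hw : w.Nodup) {a b c : V} (h1 : Bef w a b) (h2 : Bef w b c) :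
    Bef w a c := by
  exact indexOf_bef hw h1.mem_left h2.mem_right
    (lt_trans (bef_indexOf hw h1) (bef_indexOf hw h2))

/-- filter transfer, forward -/
lemma Bef.filter {w : List V} {a b : V} (p : V → Bool) (hpa : p a) (hpb : p b)
    (h : Bef w a b) : Bef (w.filter p) a b := by
  obtain ⟨l₁, l₂, l₃, rfl⟩ := h
  refine ⟨l₁.filter p, l₂.filter p, l₃.filter p, ?_⟩
  simp [List.filter_append, List.filter_cons, hpa, hpb]

/-- transfer along a sublist -/
lemma Bef.of_sublist {u w : List V} (hs : u.Sublist w) {a b : V}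
    (h : Bef u a b) : Bef w a b := by
  obtain ⟨l₁, l₂, l₃, rfl⟩ := h
  have h2 : (a :: (l₂ ++ b :: l₃)).Sublist w :=
    (List.sublist_append_right l₁ _).trans hs
  rw [List.cons_sublist_iff] at h2
  obtain ⟨r₁, r₂, rfl, har, hsub⟩ := h2
  obtain ⟨s, t, rfl⟩ := List.append_of_mem har
  have hb : b ∈ r₂ := hsub.mem (by simp)
  obtain ⟨s2, t2, rfl⟩ := List.append_of_mem hb
  exact ⟨s, t ++ s2, t2, by simp⟩

-- Part 3 : filters, permsList, amalg
/-- filter a word by membership in a finset -/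
def mfil (S : Finset V) (w : List V) : List V := w.filter (fun x => decide (x ∈ S))

@[simp] lemma mfil_nil (S : Finset V) : mfil S [] = [] := rfl

lemma mfil_cons (S : Finset V) (a : V) (w : List V) :
    mfil S (a :: w) = if a ∈ S then a :: mfil S w else mfil S w := by
  by_cases h : a ∈ S <;> simp [mfil, List.filter_cons, h]

lemma mfil_append (S : Finset V) (w₁ w₂ : List V) :
    mfil S (w₁ ++ w₂) = mfil S w₁ ++ mfil S w₂ := by
  simp [mfil, List.filter_append]

lemma mfil_sublist (S : Finset V) (w : List V) : (mfil S w).Sublist w :=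
  List.filter_sublist

lemma mem_mfil {S : Finset V} {w : List V} {x : V} : x ∈ mfil S w ↔ x ∈ w ∧ x ∈ S := by
  simp [mfil]

lemma mfil_congr {S T : Finset V} {w : List V} (h : ∀ x ∈ w, x ∈ S ↔ x ∈ T) :
    mfil S w = mfil T w := by
  apply List.filter_congr
  intro x hx
  simp [h x hx]

lemma mfil_eq_self {S : Finset V} {w : List V} (h : ∀ x ∈ w, x ∈ S) : mfil S w = w := by
  rw [mfil, List.filter_eq_self]; intro a ha; simpa using h a ha

lemma mfil_eq_nil {S : Finset V} {w : List V} (h : ∀ x ∈ w, x ∉ S) : mfil S w = [] := by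
  induction w with
  | nil => rfl
  | cons a t ih =>
    rw [mfil_cons, if_neg (h a (by simp))]
    exact ih (fun x hx => h x (by simp [hx]))

lemma mfil_mfil (S T : Finset V) (w : List V) : mfil S (mfil T w) = mfil (S ∩ T) w := by
  rw [mfil, mfil, mfil, List.filter_filter]
  apply List.filter_congr
  intro x _
  by_cases h1 : x ∈ S <;> by_cases h2 : x ∈ T <;> simp [h1, h2]

lemma bef_mfil {S : Finset V} {w : List V} {a b : V} (ha : a ∈ S) (hb : b ∈ S)
    (h : Bef w a b) : Bef (mfil S w) a b :=
  h.filter _ (by simp [ha]) (by simp [hb])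

lemma nodup_mfil {S : Finset V} {w : List V} (h : w.Nodup) : (mfil S w).Nodup :=
  (mfil_sublist S w).nodup h

/-- all nodup enumerations of a finset -/
noncomputable def permsList (T : Finset V) : Finset (List V) := T.toList.permutations.toFinset

lemma mem_permsList {T : Finset V} {w : List V} :
    w ∈ permsList T ↔ w.Nodup ∧ w.toFinset = T := by
  rw [permsList, List.mem_toFinset, List.mem_permutations]
  constructor
  · intro h
    exact ⟨h.nodup_iff.2 T.nodup_toList, by rw [List.toFinset_eq_of_perm _ _ h, Finset.toList_toFinset]⟩
  · rintro ⟨h1, h2⟩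
    apply List.perm_of_nodup_nodup_toFinset_eq h1 T.nodup_toList
    rw [h2, Finset.toList_toFinset]

/-- amalgamated shuffles of `u` and `v` -/
noncomputable def amalg (u v : List V) : Finset (List V) :=
  (permsList (u.toFinset ∪ v.toFinset)).filter
    (fun w => mfil u.toFinset w = u ∧ mfil v.toFinset w = v)

lemma mem_amalg {u v w : List V} :
    w ∈ amalg u v ↔ w.Nodup ∧ w.toFinset = u.toFinset ∪ v.toFinset ∧
      mfil u.toFinset w = u ∧ mfil v.toFinset w = v := by
  rw [amalg, Finset.mem_filter, mem_permsList]
  tauto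

-- Part 4 : structural lemmas for amalg
lemma amalg_comm (u v : List V) : amalg u v = amalg v u := by
  ext w
  rw [mem_amalg, mem_amalg]
  constructor <;> rintro ⟨h1, h2, h3, h4⟩ <;>
    exact ⟨h1, by rw [h2, Finset.union_comm], h4, h3⟩

lemma amalg_ne_nil {s : V} {u₀ v w : List V} (hw : w ∈ amalg (s :: u₀) v) : w ≠ [] := by
  rw [mem_amalg] at hw
  intro h
  subst h
  have : s ∈ (List.nil (α := V)).toFinset := by
    rw [hw.2.1]; simp
  simp at this

/-- every member of the amalgamation has head `a` or `b`. -/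
lemma amalg_head_cases {a b : V} {u₀ v₀ w : List V} (hw : w ∈ amalg (a :: u₀) (b :: v₀)) :
    ∃ t, w = a :: t ∨ w = b :: t := by
  have hne := amalg_ne_nil hw
  rw [mem_amalg] at hw
  obtain ⟨h1, h2, h3, h4⟩ := hw
  cases w with
  | nil => exact absurd rfl hne
  | cons h t =>
    have hmem : h ∈ (a :: u₀).toFinset ∪ (b :: v₀).toFinset := by
      rw [← h2]; simp
    refine ⟨t, ?_⟩
    rcases Finset.mem_union.1 hmem with hm | hm
    · left
      rw [mfil_cons, if_pos hm] at h3
      obtain rfl : h = a := by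
        have := congrArg List.head? h3; simpa using this
      rfl
    · right
      rw [mfil_cons, if_pos hm] at h4
      obtain rfl : h = b := by
        have := congrArg List.head? h4; simpa using this
      rfl

lemma amalg_head_eq {s : V} {u₀ v₀ w : List V} (hw : w ∈ amalg (s :: u₀) (s :: v₀)) :
    ∃ t, w = s :: t := by
  obtain ⟨t, h | h⟩ := amalg_head_cases hw <;> exact ⟨t, h⟩

/-- peeling off a common head. -/
lemma amalg_cons_cons {s : V} {u₀ v₀ : List V} (hu : (s :: u₀).Nodup) (hv : (s :: v₀).Nodup) :
    amalg (s :: u₀) (s :: v₀) = (amalg u₀ v₀).image (s :: ·) := by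
  have hsu : s ∉ u₀ := by simp [List.nodup_cons] at hu; tauto
  have hsv : s ∉ v₀ := by simp [List.nodup_cons] at hv; tauto
  ext w
  constructor
  · intro hw
    obtain ⟨t, rfl⟩ := amalg_head_eq hw
    rw [mem_amalg] at hw
    obtain ⟨h1, h2, h3, h4⟩ := hw
    have hst : s ∉ t := by simp [List.nodup_cons] at h1; tauto
    have ht1 : t.Nodup := by simp [List.nodup_cons] at h1; tauto
    rw [mfil_cons, if_pos (by simp)] at h3 h4
    have h3' := (List.cons.inj h3).2
    have h4' := (List.cons.inj h4).2
    rw [Finset.mem_image]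
    refine ⟨t, ?_, rfl⟩
    rw [mem_amalg]
    refine ⟨ht1, ?_, ?_, ?_⟩
    · ext x
      have h2x := Finset.ext_iff.1 h2 x
      by_cases hxs : x = s
      · subst hxs; simp [hst, hsu, hsv]
      · simp [hxs] at h2x ⊢; tauto
    · exact (mfil_congr (fun x hx => by
        simp [show x ≠ s from fun hc => hst (hc ▸ hx)])).trans h3'
    · exact (mfil_congr (fun x hx => by
        simp [show x ≠ s from fun hc => hst (hc ▸ hx)])).trans h4' 
  · intro hw
    rw [Finset.mem_image] at hw
    obtain ⟨t, ht, rfl⟩ := hw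
    rw [mem_amalg] at ht ⊢
    obtain ⟨h1, h2, h3, h4⟩ := ht
    have hst : s ∉ t := by
      intro hc
      have : s ∈ u₀.toFinset ∪ v₀.toFinset := by rw [← h2]; simp [hc]
      simp [hsu, hsv] at this
    refine ⟨by simp [List.nodup_cons, hst, h1], ?_, ?_, ?_⟩
    · ext x
      have h2x := Finset.ext_iff.1 h2 x
      by_cases hxs : x = s
      · subst hxs; simp
      · simp [hxs] at h2x ⊢; tauto
    · rw [mfil_cons, if_pos (by simp)]
      congr 1
      exact (mfil_congr (fun x hx => by
        simp [show x ≠ s from fun hc => hst (hc ▸ hx)])).trans h3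
    · rw [mfil_cons, if_pos (by simp)]
      congr 1
      exact (mfil_congr (fun x hx => by
        simp [show x ≠ s from fun hc => hst (hc ▸ hx)])).trans h4

/-- absorbing a private head letter of `u` into `v`. -/
lemma amalg_absorb {a : V} {u₀' v₀ w : List V} (hu : (a :: u₀').Nodup)
    (ha : a ∉ v₀.toFinset) :
    (w ∈ amalg (a :: u₀') v₀ ∧ ∃ t, w = a :: t) ↔ w ∈ amalg (a :: u₀') (a :: v₀) := by
  have hau : a ∉ u₀' := by simp [List.nodup_cons] at hu; tauto
  have hav : a ∉ v₀ := by simpa using ha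
  constructor
  · rintro ⟨hw, t, rfl⟩
    rw [mem_amalg] at hw ⊢
    obtain ⟨h1, h2, h3, h4⟩ := hw
    have hat : a ∉ t := by simp [List.nodup_cons] at h1; tauto
    refine ⟨h1, ?_, h3, ?_⟩
    · ext x
      have h2x := Finset.ext_iff.1 h2 x
      by_cases hxs : x = a
      · subst hxs; simp
      · simp [hxs] at h2x ⊢; tauto
    · rw [mfil_cons, if_pos (by simp)]
      rw [mfil_cons, if_neg (by simpa using ha)] at h4
      congr 1
      exact (mfil_congr (fun x hx => by
        simp [show x ≠ a from fun hc => hat (hc ▸ hx)])).trans h4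
  · intro hw
    obtain ⟨t, rfl⟩ := amalg_head_eq hw
    rw [mem_amalg] at hw ⊢
    obtain ⟨h1, h2, h3, h4⟩ := hw
    have hat : a ∉ t := by simp [List.nodup_cons] at h1; tauto
    rw [mfil_cons, if_pos (by simp)] at h4
    have h4' := (List.cons.inj h4).2
    constructor
    · refine ⟨h1, ?_, h3, ?_⟩
      · ext x
        have h2x := Finset.ext_iff.1 h2 x
        by_cases hxs : x = a
        · subst hxs; simp [hat, hau, hav]
        · simp [hxs] at h2x ⊢; tauto
      · rw [mfil_cons, if_neg (by simpa using ha)]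
        exact (mfil_congr (fun x hx => by
          simp [show x ≠ a from fun hc => hat (hc ▸ hx)])).trans h4' 
    · exact ⟨t, rfl⟩

/-- when the letters of `u` all occur in `v`, the amalgamation is `{v}`. -/
lemma amalg_subsumed {u v : List V} (hv : v.Nodup) (hsub : u.toFinset ⊆ v.toFinset)
    (hfil : mfil u.toFinset v = u) : amalg u v = {v} := by
  ext w
  rw [mem_amalg, Finset.mem_singleton]
  constructor
  · rintro ⟨h1, h2, h3, h4⟩
    have h2' : w.toFinset = v.toFinset := by
      rw [h2, Finset.union_eq_right.2 hsub]
    have : mfil v.toFinset w = w := mfil_eq_self (fun x hx => h2' ▸ (by simp [hx]))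
    rw [← h4, this]
  · rintro rfl
    exact ⟨hv, by rw [Finset.union_eq_right.2 hsub],
      hfil, mfil_eq_self (fun x hx => by simp [hx])⟩

-- Part 5 : field identities and helper computations
lemma field_id1 {xs xa xb : K V} (h1 : xs - xa ≠ 0) (h2 : xs - xb ≠ 0) (h3 : xa - xb ≠ 0) :
    (xs - xa)⁻¹ * (xa - xb)⁻¹ + (xs - xb)⁻¹ * (xb - xa)⁻¹ = (xs - xa)⁻¹ * (xs - xb)⁻¹ := by
  have h4 : xb - xa ≠ 0 := fun h => h3 (by linear_combination -h)
  field_simp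
  ring

lemma field_id2 {xs xa xb xq : K V} (h1 : xs - xa ≠ 0) (h2 : xs - xb ≠ 0) (h3 : xa - xb ≠ 0) :
    (xs - xa)⁻¹ * (xa - xb)⁻¹ * (xa - xq) + (xs - xb)⁻¹ * (xb - xa)⁻¹ * (xb - xq) =
      (xs - xa)⁻¹ * (xs - xb)⁻¹ * (xs - xq) := by
  have h4 : xb - xa ≠ 0 := fun h => h3 (by linear_combination -h)
  field_simp
  ring

/-- pull a common head letter out of a membership filter -/
lemma mfil_cons_out {s : V} {u₀ : List V} (S : Finset V) (hs : s ∈ insert s S)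
    (hsu : s ∉ u₀) : mfil (insert s S) (s :: u₀) = s :: mfil S u₀ := by
  rw [mfil_cons, if_pos hs]
  congr 1
  exact mfil_congr (fun x hx => by
    simp [show x ≠ s from fun hc => hsu (hc ▸ hx)])

lemma toFinset_cons_eq (s : V) (l : List V) : (s :: l).toFinset = insert s l.toFinset := by
  simp

/-- filtering by `(s::v₀)` on a word not containing `s` -/
lemma mfil_insert_not_mem {s : V} {u : List V} (S : Finset V) (hsu : s ∉ u) :
    mfil (insert s S) u = mfil S u :=
  mfil_congr (fun x hx => by simp [show x ≠ s from fun hc => hsu (hc ▸ hx)])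

-- Part 6 : the pointed amalgamated shuffle identity
lemma Pprime_left_nil (s : V) (v₀ : List V) (hv : (s :: v₀).Nodup) :
    (∑ w ∈ amalg [s] (s :: v₀), psi w) =
      psi [s] * psi (s :: v₀) * DD (mfil (s :: v₀).toFinset [s]) := by
  have hsv : s ∉ v₀ := by simp [List.nodup_cons] at hv; tauto
  have h1 : mfil ([s] : List V).toFinset (s :: v₀) = [s] := by
    rw [mfil_cons, if_pos (by simp)]
    rw [mfil_eq_nil (fun x hx => by
      simp [show x ≠ s from fun hc => hsv (hc ▸ hx)])]
  have h2 : mfil (s :: v₀).toFinset [s] = [s] := by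
    rw [mfil_cons, if_pos (by simp)]; rfl
  rw [amalg_subsumed hv (by simp) h1, h2, Finset.sum_singleton, psi_single, DD_single]
  ring

lemma Pprime_right_nil (s : V) (u₀ : List V) (hu : (s :: u₀).Nodup) :
    (∑ w ∈ amalg (s :: u₀) [s], psi w) =
      psi (s :: u₀) * psi [s] * DD (mfil ([s] : List V).toFinset (s :: u₀)) := by
  have hsu : s ∉ u₀ := by simp [List.nodup_cons] at hu; tauto
  have h1 : mfil ([s] : List V).toFinset (s :: u₀) = [s] := by
    rw [mfil_cons, if_pos (by simp)]
    rw [mfil_eq_nil (fun x hx => by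
      simp [show x ≠ s from fun hc => hsu (hc ▸ hx)])]
  rw [amalg_comm, amalg_subsumed hu (by simp) h1, Finset.sum_singleton, psi_single, h1, DD_single]
  ring

set_option maxHeartbeats 1000000 in
lemma Pprime : ∀ (n : ℕ) (s : V) (u₀ v₀ : List V), u₀.length + v₀.length ≤ n →
    (s :: u₀).Nodup → (s :: v₀).Nodup →
    mfil (s :: v₀).toFinset (s :: u₀) = mfil (s :: u₀).toFinset (s :: v₀) →
    (∑ w ∈ amalg (s :: u₀) (s :: v₀), psi w) =
      psi (s :: u₀) * psi (s :: v₀) * DD (mfil (s :: v₀).toFinset (s :: u₀)) := by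
  intro n
  induction n with
  | zero =>
    intro s u₀ v₀ hlen hu hv H
    obtain rfl : u₀ = [] := List.length_eq_zero_iff.1 (by omega)
    exact Pprime_left_nil s v₀ hv
  | succ m ih =>
    intro s u₀ v₀ hlen hu hv H
    rcases u₀ with _ | ⟨a, u₁⟩
    · exact Pprime_left_nil s v₀ hv
    rcases v₀ with _ | ⟨b, v₁⟩
    · exact Pprime_right_nil s (a :: u₁) hu
    -- main case
    have hsu : s ∉ a :: u₁ := by simp [List.nodup_cons] at hu; simp; tauto
    have hsv : s ∉ b :: v₁ := by simp [List.nodup_cons] at hv; simp; tauto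
    have hu₀ : (a :: u₁).Nodup := hu.of_cons
    have hv₀ : (b :: v₁).Nodup := hv.of_cons
    have Hcu : mfil (s :: b :: v₁).toFinset (s :: a :: u₁)
        = s :: mfil (b :: v₁).toFinset (a :: u₁) := by
      rw [show ((s :: b :: v₁ : List V)).toFinset = insert s (b :: v₁).toFinset by simp]
      exact mfil_cons_out _ (by simp) hsu
    have Hcv : mfil (s :: a :: u₁).toFinset (s :: b :: v₁)
        = s :: mfil (a :: u₁).toFinset (b :: v₁) := by
      rw [show ((s :: a :: u₁ : List V)).toFinset = insert s (a :: u₁).toFinset by simp]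
      exact mfil_cons_out _ (by simp) hsv
    have H₀ : mfil (b :: v₁).toFinset (a :: u₁) = mfil (a :: u₁).toFinset (b :: v₁) := by
      have := H; rw [Hcu, Hcv] at this; exact (List.cons.inj this).2
    have hlen2 : u₁.length + v₁.length + 2 ≤ m + 1 := by
      simpa [Nat.add_assoc, Nat.add_comm, Nat.add_left_comm] using hlen
    have hinj : ∀ x ∈ amalg (a :: u₁) (b :: v₁), ∀ y ∈ amalg (a :: u₁) (b :: v₁),
        s :: x = s :: y → x = y := fun x _ y _ h => (List.cons.inj h).2
    rw [amalg_cons_cons hu hv, Finset.sum_image hinj, Hcu]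
    have hsa : xv s - xv a ≠ 0 := xv_sub_ne_zero (fun hc => hsu (by rw [hc]; simp))
    have hsb : xv s - xv b ≠ 0 := xv_sub_ne_zero (fun hc => hsv (by rw [hc]; simp))
    by_cases hab : a = b
    · -- common second letter
      subst hab
      have hsum1 : ∀ wb ∈ amalg (a :: u₁) (a :: v₁),
          psi (s :: wb) = (xv s - xv a)⁻¹ * psi wb := by
        intro wb hwb
        obtain ⟨t, rfl⟩ := amalg_head_eq hwb
        rw [psi_cons_cons]
      rw [Finset.sum_congr rfl hsum1, ← Finset.mul_sum,
        ih a u₁ v₁ (by omega) hu₀ hv₀ H₀]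
      have hc : mfil (a :: v₁).toFinset (a :: u₁) = a :: mfil (a :: v₁).toFinset u₁ := by
        rw [mfil_cons, if_pos (by simp)]
      rw [hc, DD_cons_cons, psi_cons_cons (t := u₁), psi_cons_cons (t := v₁)]
      field_simp
    · have hab' : xv a - xv b ≠ 0 := xv_sub_ne_zero hab
      have hba' : xv b - xv a ≠ 0 := xv_sub_ne_zero (fun hc => hab hc.symm)
      by_cases hav : a ∈ (b :: v₁).toFinset <;> by_cases hbu : b ∈ (a :: u₁).toFinset
      · -- both common: impossible
        exfalso
        have h1 : mfil (b :: v₁).toFinset (a :: u₁)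
            = a :: mfil (b :: v₁).toFinset u₁ := by rw [mfil_cons, if_pos hav]
        have h2 : mfil (a :: u₁).toFinset (b :: v₁)
            = b :: mfil (a :: u₁).toFinset v₁ := by rw [mfil_cons, if_pos hbu]
        rw [h1, h2] at H₀
        exact hab (List.cons.inj H₀).1
      · -- a common, b private
        have hbu' : b ∉ a :: u₁ := by simpa using hbu
        have hbv : b ∉ v₁ := by simp [List.nodup_cons] at hv₀; tauto
        have e1 : mfil (b :: v₁).toFinset (a :: u₁) = mfil v₁.toFinset (a :: u₁) := by
          rw [show ((b :: v₁ : List V)).toFinset = insert b v₁.toFinset by simp]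
          exact mfil_insert_not_mem _ hbu'
        have e2 : mfil (a :: u₁).toFinset (b :: v₁) = mfil (a :: u₁).toFinset v₁ := by
          rw [mfil_cons, if_neg hbu]
        have hK : mfil (a :: u₁).toFinset v₁ = mfil v₁.toFinset (a :: u₁) := by
          rw [← e1, ← e2]; exact H₀.symm
        have hset : amalg (a :: u₁) (b :: v₁) = amalg (b :: v₁) (b :: a :: u₁) := by
          ext wb
          constructor
          · intro hwb
            obtain ⟨t, rfl | rfl⟩ := amalg_head_cases hwb
            · exfalso
              have hfl := (mem_amalg.1 hwb).2.2.2
              rw [mfil_cons, if_pos hav] at hfl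
              have h5 := congrArg List.head? hfl
              simp at h5
              exact hab h5
            · exact (amalg_absorb hv₀ hbu).1 ⟨by rw [← amalg_comm]; exact hwb, t, rfl⟩
          · intro hwb
            rw [amalg_comm]
            exact ((amalg_absorb hv₀ hbu).2 hwb).1
        rw [hset]
        have hsum1 : ∀ wb ∈ amalg (b :: v₁) (b :: a :: u₁),
            psi (s :: wb) = (xv s - xv b)⁻¹ * psi wb := by
          intro wb hwb
          obtain ⟨t, rfl⟩ := amalg_head_eq hwb
          rw [psi_cons_cons]
        rw [Finset.sum_congr rfl hsum1, ← Finset.mul_sum]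
        have hL : mfil (b :: a :: u₁).toFinset (b :: v₁)
            = b :: mfil (a :: u₁).toFinset v₁ := by
          rw [show ((b :: a :: u₁ : List V)).toFinset = insert b (a :: u₁).toFinset by simp]
          exact mfil_cons_out _ (by simp) hbv
        have hR : mfil (b :: v₁).toFinset (b :: a :: u₁)
            = b :: mfil v₁.toFinset (a :: u₁) := by
          rw [show ((b :: v₁ : List V)).toFinset = insert b v₁.toFinset by simp]
          exact mfil_cons_out _ (by simp) hbu'
        have H' : mfil (b :: a :: u₁).toFinset (b :: v₁)
            = mfil (b :: v₁).toFinset (b :: a :: u₁) := by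
          rw [hL, hR, hK]
        have IH2 := ih b v₁ (a :: u₁) (by simp only [List.length_cons]; omega) hv₀
          (by rw [List.nodup_cons]; exact ⟨hbu', hu₀⟩) H'
        rw [IH2, hL, hK, ← e1]
        have hc : mfil (b :: v₁).toFinset (a :: u₁)
            = a :: mfil (b :: v₁).toFinset u₁ := by rw [mfil_cons, if_pos hav]
        rw [hc]
        simp only [DD_cons_cons, psi_cons_cons]
        field_simp
      · -- a private, b common
        have hav' : a ∉ b :: v₁ := by simpa using hav
        have hau : a ∉ u₁ := by simp [List.nodup_cons] at hu₀; tauto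
        have e1 : mfil (b :: v₁).toFinset (a :: u₁) = mfil (b :: v₁).toFinset u₁ := by
          rw [mfil_cons, if_neg hav]
        have hset : amalg (a :: u₁) (b :: v₁) = amalg (a :: u₁) (a :: b :: v₁) := by
          ext wb
          constructor
          · intro hwb
            obtain ⟨t, rfl | rfl⟩ := amalg_head_cases hwb
            · exact (amalg_absorb hu₀ hav).1 ⟨hwb, t, rfl⟩
            · exfalso
              have hfl := (mem_amalg.1 hwb).2.2.1
              rw [mfil_cons, if_pos hbu] at hfl
              have h5 := congrArg List.head? hfl
              simp at h5
              exact hab h5.symm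
          · intro hwb
            exact ((amalg_absorb hu₀ hav).2 hwb).1
        rw [hset]
        have hsum1 : ∀ wb ∈ amalg (a :: u₁) (a :: b :: v₁),
            psi (s :: wb) = (xv s - xv a)⁻¹ * psi wb := by
          intro wb hwb
          obtain ⟨t, rfl⟩ := amalg_head_eq hwb
          rw [psi_cons_cons]
        rw [Finset.sum_congr rfl hsum1, ← Finset.mul_sum]
        have hL : mfil (a :: b :: v₁).toFinset (a :: u₁)
            = a :: mfil (b :: v₁).toFinset u₁ := by
          rw [show ((a :: b :: v₁ : List V)).toFinset = insert a (b :: v₁).toFinset by simp]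
          exact mfil_cons_out _ (by simp) hau
        have hR : mfil (a :: u₁).toFinset (a :: b :: v₁)
            = a :: mfil (a :: u₁).toFinset (b :: v₁) := by
          rw [mfil_cons, if_pos (by simp)]
        have H' : mfil (a :: b :: v₁).toFinset (a :: u₁)
            = mfil (a :: u₁).toFinset (a :: b :: v₁) := by
          rw [hL, hR, ← e1, H₀]
        have IH1 := ih a u₁ (b :: v₁) (by simp only [List.length_cons]; omega) hu₀
          (by rw [List.nodup_cons]; exact ⟨hav', hv₀⟩) H'
        rw [IH1, hL, ← e1]
        have hc : mfil (b :: v₁).toFinset (a :: u₁)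
            = b :: mfil (a :: u₁).toFinset v₁ := by
          rw [H₀, mfil_cons, if_pos hbu]
        rw [hc]
        simp only [DD_cons_cons, psi_cons_cons]
        field_simp
      · -- both private
        have hav' : a ∉ b :: v₁ := by simpa using hav
        have hbu' : b ∉ a :: u₁ := by simpa using hbu
        have hau : a ∉ u₁ := by simp [List.nodup_cons] at hu₀; tauto
        have hbv : b ∉ v₁ := by simp [List.nodup_cons] at hv₀; tauto
        have e1 : mfil (b :: v₁).toFinset (a :: u₁) = mfil (b :: v₁).toFinset u₁ := by
          rw [mfil_cons, if_neg hav]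
        have e1' : mfil (b :: v₁).toFinset (a :: u₁) = mfil v₁.toFinset (a :: u₁) := by
          rw [show ((b :: v₁ : List V)).toFinset = insert b v₁.toFinset by simp]
          exact mfil_insert_not_mem _ hbu'
        have e2 : mfil (a :: u₁).toFinset (b :: v₁) = mfil (a :: u₁).toFinset v₁ := by
          rw [mfil_cons, if_neg hbu]
        have hK : mfil (a :: u₁).toFinset v₁ = mfil v₁.toFinset (a :: u₁) := by
          rw [← e1', ← e2]; exact H₀.symm
        have hset : amalg (a :: u₁) (b :: v₁)
            = amalg (a :: u₁) (a :: b :: v₁) ∪ amalg (b :: v₁) (b :: a :: u₁) := by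
          ext wb
          constructor
          · intro hwb
            obtain ⟨t, rfl | rfl⟩ := amalg_head_cases hwb
            · exact Finset.mem_union_left _
                ((amalg_absorb hu₀ hav).1 ⟨hwb, t, rfl⟩)
            · exact Finset.mem_union_right _
                ((amalg_absorb hv₀ hbu).1 ⟨by rw [← amalg_comm]; exact hwb, t, rfl⟩)
          · intro hwb
            rcases Finset.mem_union.1 hwb with h | h
            · exact ((amalg_absorb hu₀ hav).2 h).1
            · rw [amalg_comm]
              exact ((amalg_absorb hv₀ hbu).2 h).1
        have hdisj : Disjoint (amalg (a :: u₁) (a :: b :: v₁))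
            (amalg (b :: v₁) (b :: a :: u₁)) := by
          rw [Finset.disjoint_left]
          intro wb h1 h2
          obtain ⟨t1, rfl⟩ := amalg_head_eq h1
          obtain ⟨t2, he⟩ := amalg_head_eq h2
          exact hab (List.cons.inj he).1
        rw [hset, Finset.sum_union hdisj]
        have hsum1 : ∀ wb ∈ amalg (a :: u₁) (a :: b :: v₁),
            psi (s :: wb) = (xv s - xv a)⁻¹ * psi wb := by
          intro wb hwb
          obtain ⟨t, rfl⟩ := amalg_head_eq hwb
          rw [psi_cons_cons]
        have hsum2 : ∀ wb ∈ amalg (b :: v₁) (b :: a :: u₁),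
            psi (s :: wb) = (xv s - xv b)⁻¹ * psi wb := by
          intro wb hwb
          obtain ⟨t, rfl⟩ := amalg_head_eq hwb
          rw [psi_cons_cons]
        rw [Finset.sum_congr rfl hsum1, Finset.sum_congr rfl hsum2,
          ← Finset.mul_sum, ← Finset.mul_sum]
        have hL1 : mfil (a :: b :: v₁).toFinset (a :: u₁)
            = a :: mfil (b :: v₁).toFinset u₁ := by
          rw [show ((a :: b :: v₁ : List V)).toFinset = insert a (b :: v₁).toFinset by simp]
          exact mfil_cons_out _ (by simp) hau
        have hR1 : mfil (a :: u₁).toFinset (a :: b :: v₁)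
            = a :: mfil (a :: u₁).toFinset (b :: v₁) := by
          rw [mfil_cons, if_pos (by simp)]
        have H1 : mfil (a :: b :: v₁).toFinset (a :: u₁)
            = mfil (a :: u₁).toFinset (a :: b :: v₁) := by
          rw [hL1, hR1, ← e1, H₀]
        have hL2 : mfil (b :: a :: u₁).toFinset (b :: v₁)
            = b :: mfil (a :: u₁).toFinset v₁ := by
          rw [show ((b :: a :: u₁ : List V)).toFinset = insert b (a :: u₁).toFinset by simp]
          exact mfil_cons_out _ (by simp) hbv
        have hR2 : mfil (b :: v₁).toFinset (b :: a :: u₁)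
            = b :: mfil v₁.toFinset (a :: u₁) := by
          rw [show ((b :: v₁ : List V)).toFinset = insert b v₁.toFinset by simp]
          exact mfil_cons_out _ (by simp) hbu'
        have H2 : mfil (b :: a :: u₁).toFinset (b :: v₁)
            = mfil (b :: v₁).toFinset (b :: a :: u₁) := by
          rw [hL2, hR2, hK]
        have IH1 := ih a u₁ (b :: v₁) (by simp only [List.length_cons]; omega) hu₀
          (by rw [List.nodup_cons]; exact ⟨hav', hv₀⟩) H1
        have IH2 := ih b v₁ (a :: u₁) (by simp only [List.length_cons]; omega) hv₀
          (by rw [List.nodup_cons]; exact ⟨hbu', hu₀⟩) H2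
        rw [IH1, IH2, hL1, hL2, hK, ← e1, ← e1']
        rcases hc0 : mfil (b :: v₁).toFinset (a :: u₁) with _ | ⟨q, c₁⟩
        · simp only [DD_cons_cons, DD_single, psi_cons_cons]
          field_simp
          ring
        · simp only [DD_cons_cons, psi_cons_cons]
          field_simp
          ring

-- Part 7 : unpointed amalgamated shuffle identity
set_option maxHeartbeats 1000000 in
lemma Ulemma {u v : List V} (hu : u.Nodup) (hv : v.Nodup)
    (H : mfil v.toFinset u = mfil u.toFinset v) (hc : mfil v.toFinset u ≠ []) :
    (∑ w ∈ amalg u v, psi w) = psi u * psi v * DD (mfil v.toFinset u) := by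
  rcases u with _ | ⟨a, u₁⟩
  · exact absurd rfl hc
  rcases v with _ | ⟨b, v₁⟩
  · exact absurd (by simp; exact mfil_eq_nil (by simp)) hc
  by_cases hab : a = b
  · subst hab
    exact Pprime (u₁.length + v₁.length) a u₁ v₁ le_rfl hu hv H
  · have hab' : xv a - xv b ≠ 0 := xv_sub_ne_zero hab
    have hba' : xv b - xv a ≠ 0 := xv_sub_ne_zero (fun hh => hab hh.symm)
    have hau : a ∉ u₁ := by simp [List.nodup_cons] at hu; tauto
    have hbv : b ∉ v₁ := by simp [List.nodup_cons] at hv; tauto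
    by_cases hav : a ∈ (b :: v₁).toFinset <;> by_cases hbu : b ∈ (a :: u₁).toFinset
    · -- both common: impossible
      exfalso
      have h1 : mfil (b :: v₁).toFinset (a :: u₁)
          = a :: mfil (b :: v₁).toFinset u₁ := by rw [mfil_cons, if_pos hav]
      have h2 : mfil (a :: u₁).toFinset (b :: v₁)
          = b :: mfil (a :: u₁).toFinset v₁ := by rw [mfil_cons, if_pos hbu]
      rw [h1, h2] at H
      exact hab (List.cons.inj H).1
    · -- a common, b private
      have hbu' : b ∉ a :: u₁ := by simpa using hbu
      have e1 : mfil (b :: v₁).toFinset (a :: u₁) = mfil v₁.toFinset (a :: u₁) := by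
        rw [show ((b :: v₁ : List V)).toFinset = insert b v₁.toFinset by simp]
        exact mfil_insert_not_mem _ hbu'
      have e2 : mfil (a :: u₁).toFinset (b :: v₁) = mfil (a :: u₁).toFinset v₁ := by
        rw [mfil_cons, if_neg hbu]
      have hK : mfil (a :: u₁).toFinset v₁ = mfil v₁.toFinset (a :: u₁) := by
        rw [← e1, ← e2]; exact H.symm
      have hset : amalg (a :: u₁) (b :: v₁) = amalg (b :: v₁) (b :: a :: u₁) := by
        ext wb
        constructor
        · intro hwb
          obtain ⟨t, rfl | rfl⟩ := amalg_head_cases hwb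
          · exfalso
            have hfl := (mem_amalg.1 hwb).2.2.2
            rw [mfil_cons, if_pos hav] at hfl
            have h5 := congrArg List.head? hfl
            simp at h5
            exact hab h5
          · exact (amalg_absorb hv hbu).1 ⟨by rw [← amalg_comm]; exact hwb, t, rfl⟩
        · intro hwb
          rw [amalg_comm]
          exact ((amalg_absorb hv hbu).2 hwb).1
      rw [hset]
      have hL : mfil (b :: a :: u₁).toFinset (b :: v₁)
          = b :: mfil (a :: u₁).toFinset v₁ := by
        rw [show ((b :: a :: u₁ : List V)).toFinset = insert b (a :: u₁).toFinset by simp]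
        exact mfil_cons_out _ (by simp) hbv
      have hR : mfil (b :: v₁).toFinset (b :: a :: u₁)
          = b :: mfil v₁.toFinset (a :: u₁) := by
        rw [show ((b :: v₁ : List V)).toFinset = insert b v₁.toFinset by simp]
        exact mfil_cons_out _ (by simp) hbu'
      have H' : mfil (b :: a :: u₁).toFinset (b :: v₁)
          = mfil (b :: v₁).toFinset (b :: a :: u₁) := by rw [hL, hR, hK]
      have P := Pprime (v₁.length + (a :: u₁).length) b v₁ (a :: u₁) le_rfl hv
        (by rw [List.nodup_cons]; exact ⟨hbu', hu⟩) H'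
      rw [P, hL, hK, ← e1]
      have hcc : mfil (b :: v₁).toFinset (a :: u₁)
          = a :: mfil (b :: v₁).toFinset u₁ := by rw [mfil_cons, if_pos hav]
      rw [hcc]
      simp only [DD_cons_cons, psi_cons_cons]
      field_simp
    · -- a private, b common
      have hav' : a ∉ b :: v₁ := by simpa using hav
      have e1 : mfil (b :: v₁).toFinset (a :: u₁) = mfil (b :: v₁).toFinset u₁ := by
        rw [mfil_cons, if_neg hav]
      have hset : amalg (a :: u₁) (b :: v₁) = amalg (a :: u₁) (a :: b :: v₁) := by
        ext wb
        constructor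
        · intro hwb
          obtain ⟨t, rfl | rfl⟩ := amalg_head_cases hwb
          · exact (amalg_absorb hu hav).1 ⟨hwb, t, rfl⟩
          · exfalso
            have hfl := (mem_amalg.1 hwb).2.2.1
            rw [mfil_cons, if_pos hbu] at hfl
            have h5 := congrArg List.head? hfl
            simp at h5
            exact hab h5.symm
        · intro hwb
          exact ((amalg_absorb hu hav).2 hwb).1
      rw [hset]
      have hL : mfil (a :: b :: v₁).toFinset (a :: u₁)
          = a :: mfil (b :: v₁).toFinset u₁ := by
        rw [show ((a :: b :: v₁ : List V)).toFinset = insert a (b :: v₁).toFinset by simp]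
        exact mfil_cons_out _ (by simp) hau
      have hR : mfil (a :: u₁).toFinset (a :: b :: v₁)
          = a :: mfil (a :: u₁).toFinset (b :: v₁) := by
        rw [mfil_cons, if_pos (by simp)]
      have H' : mfil (a :: b :: v₁).toFinset (a :: u₁)
          = mfil (a :: u₁).toFinset (a :: b :: v₁) := by rw [hL, hR, ← e1, H]
      have P := Pprime (u₁.length + (b :: v₁).length) a u₁ (b :: v₁) le_rfl hu
        (by rw [List.nodup_cons]; exact ⟨hav', hv⟩) H'
      rw [P, hL, ← e1]
      have hcc : mfil (b :: v₁).toFinset (a :: u₁)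
          = b :: mfil (a :: u₁).toFinset v₁ := by
        rw [H, mfil_cons, if_pos hbu]
      rw [hcc]
      simp only [DD_cons_cons, psi_cons_cons]
      field_simp
    · -- both private
      have hav' : a ∉ b :: v₁ := by simpa using hav
      have hbu' : b ∉ a :: u₁ := by simpa using hbu
      have e1 : mfil (b :: v₁).toFinset (a :: u₁) = mfil (b :: v₁).toFinset u₁ := by
        rw [mfil_cons, if_neg hav]
      have e1' : mfil (b :: v₁).toFinset (a :: u₁) = mfil v₁.toFinset (a :: u₁) := by
        rw [show ((b :: v₁ : List V)).toFinset = insert b v₁.toFinset by simp]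
        exact mfil_insert_not_mem _ hbu'
      have e2 : mfil (a :: u₁).toFinset (b :: v₁) = mfil (a :: u₁).toFinset v₁ := by
        rw [mfil_cons, if_neg hbu]
      have hK : mfil (a :: u₁).toFinset v₁ = mfil v₁.toFinset (a :: u₁) := by
        rw [← e1', ← e2]; exact H.symm
      have hset : amalg (a :: u₁) (b :: v₁)
          = amalg (a :: u₁) (a :: b :: v₁) ∪ amalg (b :: v₁) (b :: a :: u₁) := by
        ext wb
        constructor
        · intro hwb
          obtain ⟨t, rfl | rfl⟩ := amalg_head_cases hwb
          · exact Finset.mem_union_left _ ((amalg_absorb hu hav).1 ⟨hwb, t, rfl⟩)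
          · exact Finset.mem_union_right _
              ((amalg_absorb hv hbu).1 ⟨by rw [← amalg_comm]; exact hwb, t, rfl⟩)
        · intro hwb
          rcases Finset.mem_union.1 hwb with h | h
          · exact ((amalg_absorb hu hav).2 h).1
          · rw [amalg_comm]
            exact ((amalg_absorb hv hbu).2 h).1
      have hdisj : Disjoint (amalg (a :: u₁) (a :: b :: v₁))
          (amalg (b :: v₁) (b :: a :: u₁)) := by
        rw [Finset.disjoint_left]
        intro wb h1 h2
        obtain ⟨t1, rfl⟩ := amalg_head_eq h1
        obtain ⟨t2, he⟩ := amalg_head_eq h2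
        exact hab (List.cons.inj he).1
      rw [hset, Finset.sum_union hdisj]
      have hL1 : mfil (a :: b :: v₁).toFinset (a :: u₁)
          = a :: mfil (b :: v₁).toFinset u₁ := by
        rw [show ((a :: b :: v₁ : List V)).toFinset = insert a (b :: v₁).toFinset by simp]
        exact mfil_cons_out _ (by simp) hau
      have hR1 : mfil (a :: u₁).toFinset (a :: b :: v₁)
          = a :: mfil (a :: u₁).toFinset (b :: v₁) := by
        rw [mfil_cons, if_pos (by simp)]
      have H1 : mfil (a :: b :: v₁).toFinset (a :: u₁)
          = mfil (a :: u₁).toFinset (a :: b :: v₁) := by rw [hL1, hR1, ← e1, H]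
      have hL2 : mfil (b :: a :: u₁).toFinset (b :: v₁)
          = b :: mfil (a :: u₁).toFinset v₁ := by
        rw [show ((b :: a :: u₁ : List V)).toFinset = insert b (a :: u₁).toFinset by simp]
        exact mfil_cons_out _ (by simp) hbv
      have hR2 : mfil (b :: v₁).toFinset (b :: a :: u₁)
          = b :: mfil v₁.toFinset (a :: u₁) := by
        rw [show ((b :: v₁ : List V)).toFinset = insert b v₁.toFinset by simp]
        exact mfil_cons_out _ (by simp) hbu'
      have H2 : mfil (b :: a :: u₁).toFinset (b :: v₁)
          = mfil (b :: v₁).toFinset (b :: a :: u₁) := by rw [hL2, hR2, hK]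
      have P1 := Pprime (u₁.length + (b :: v₁).length) a u₁ (b :: v₁) le_rfl hu
        (by rw [List.nodup_cons]; exact ⟨hav', hv⟩) H1
      have P2 := Pprime (v₁.length + (a :: u₁).length) b v₁ (a :: u₁) le_rfl hv
        (by rw [List.nodup_cons]; exact ⟨hbu', hu⟩) H2
      rw [P1, P2, hL1, hL2, hK, ← e1, ← e1']
      rcases hc0 : mfil (b :: v₁).toFinset (a :: u₁) with _ | ⟨q, c₁⟩
      · exact absurd hc0 hc
      · simp only [DD_cons_cons, psi_cons_cons]
        field_simp
        ring

-- Part 8 : linear extensions as words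
lemma bef_get {l : List V} {i j : Fin l.length} (hij : i < j) :
    Bef l (l.get i) (l.get j) := by
  have h1 : l = l.take (i + 1) ++ l.drop (i + 1) := (List.take_append_drop _ l).symm
  have h2 : l.get j ∈ l.drop (i + 1) := by
    have he : (↑i + 1) + ((j : ℕ) - (↑i + 1)) = (j : ℕ) := by omega
    rw [List.mem_iff_getElem]
    refine ⟨(j : ℕ) - (i + 1), by rw [List.length_drop]; omega, ?_⟩
    rw [List.getElem_drop]
    simp only [List.get_eq_getElem]
    congr 1
  obtain ⟨l₂, l₃, hd⟩ := List.append_of_mem h2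
  have h3 : l.take (i + 1) = l.take i ++ [l.get i] := by
    rw [List.take_succ]
    simp [List.getElem?_eq_getElem i.isLt]
  refine ⟨l.take i, l₂, l₃, ?_⟩
  calc l = l.take (i + 1) ++ l.drop (i + 1) := h1
  _ = l.take (i + 1) ++ (l₂ ++ l.get j :: l₃) := by rw [hd]
  _ = l.take i ++ l.get i :: (l₂ ++ l.get j :: l₃) := by
    rw [h3]
    simp only [List.get_eq_getElem]
    rw [List.append_assoc]
    rfl

lemma bef_exists_get {w : List V} {a b : V} (hw : w.Nodup) (h : Bef w a b) :
    ∃ i j : Fin w.length, i < j ∧ w.get i = a ∧ w.get j = b := by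
  have ha := h.mem_left
  have hb := h.mem_right
  have hia : w.idxOf a < w.length := List.idxOf_lt_length_iff.2 ha
  have hib : w.idxOf b < w.length := List.idxOf_lt_length_iff.2 hb
  refine ⟨⟨w.idxOf a, hia⟩, ⟨w.idxOf b, hib⟩, ?_, ?_, ?_⟩
  · exact bef_indexOf hw h
  · exact List.idxOf_get hia
  · exact List.idxOf_get hib

/-- decidable companion of `Bef` -/
def BefI (w : List V) (a b : V) : Prop := a ∈ w ∧ b ∈ w ∧ w.idxOf a < w.idxOf b

instance (w : List V) (a b : V) : Decidable (BefI w a b) := by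
  unfold BefI; exact inferInstance

lemma bef_iff_befI {w : List V} (hw : w.Nodup) {a b : V} : Bef w a b ↔ BefI w a b :=
  ⟨fun h => ⟨h.mem_left, h.mem_right, bef_indexOf hw h⟩,
   fun ⟨ha, hb, hi⟩ => indexOf_bef hw ha hb hi⟩

/-- linear extensions of the graph `(W, E)` as words -/
noncomputable def LEW (W : Finset V) (E : Finset (V × V)) : Finset (List V) :=
  (permsList W).filter (fun w => ∀ e ∈ E, BefI w e.1 e.2)

lemma mem_LEW {W : Finset V} {E : Finset (V × V)} {w : List V} :
    w ∈ LEW W E ↔ w.Nodup ∧ w.toFinset = W ∧ ∀ e ∈ E, Bef w e.1 e.2 := by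
  rw [LEW, Finset.mem_filter, mem_permsList]
  constructor
  · rintro ⟨⟨h1, h2⟩, h3⟩
    exact ⟨h1, h2, fun e he => (bef_iff_befI h1).2 (h3 e he)⟩
  · rintro ⟨h1, h2, h3⟩
    exact ⟨⟨h1, h2⟩, fun e he => (bef_iff_befI h1).1 (h3 e he)⟩

lemma wordOf_length {W : Finset V} (σ : Fin W.card ≃ W) :
    (wordOf W σ).length = W.card := by simp [wordOf]

lemma wordOf_get {W : Finset V} (σ : Fin W.card ≃ W) (i : Fin (wordOf W σ).length) :
    (wordOf W σ).get i = ((σ (Fin.cast (wordOf_length σ) i) : W) : V) := by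
  simp only [wordOf, List.get_eq_getElem, List.getElem_map, List.getElem_finRange]
  show ((List.finRange W.card).map fun i => ((σ i : W) : V))[(i : ℕ)]'(by simpa [wordOf] using i.isLt) = _
  rw [List.getElem_map, List.getElem_finRange]; rfl

lemma wordOf_nodup {W : Finset V} (σ : Fin W.card ≃ W) : (wordOf W σ).Nodup := by
  apply List.Nodup.map
  · intro i j hij
    exact σ.injective (Subtype.ext hij)
  · exact List.nodup_finRange _

lemma wordOf_toFinset {W : Finset V} (σ : Fin W.card ≃ W) : (wordOf W σ).toFinset = W := by
  ext x
  simp only [List.mem_toFinset, wordOf, List.mem_map, List.mem_finRange]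
  constructor
  · rintro ⟨i, _, rfl⟩; exact (σ i).2
  · intro hx
    exact ⟨σ.symm ⟨x, hx⟩, by simp⟩

lemma isExt_iff_word {W : Finset V} {E : Finset (V × V)} (σ : Fin W.card ≃ W) :
    IsExt W E σ ↔ ∀ e ∈ E, Bef (wordOf W σ) e.1 e.2 := by
  constructor
  · intro h e he
    obtain ⟨i, j, hij, h1, h2⟩ := h e he
    have := bef_get (l := wordOf W σ)
      (i := Fin.cast (wordOf_length σ).symm i) (j := Fin.cast (wordOf_length σ).symm j)
      (by simpa using hij)
    rw [wordOf_get, wordOf_get] at this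
    simpa [h1, h2] using this
  · intro h e he
    obtain ⟨i, j, hij, h1, h2⟩ := bef_exists_get (wordOf_nodup σ) (h e he)
    refine ⟨Fin.cast (wordOf_length σ) i, Fin.cast (wordOf_length σ) j, by simpa using hij,
      ?_, ?_⟩
    · rw [← h1, wordOf_get]
    · rw [← h2, wordOf_get]

lemma wordOf_mem_LEW {W : Finset V} {E : Finset (V × V)} {σ : Fin W.card ≃ W}
    (h : IsExt W E σ) : wordOf W σ ∈ LEW W E :=
  mem_LEW.2 ⟨wordOf_nodup σ, wordOf_toFinset σ, (isExt_iff_word σ).1 h⟩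

lemma wordOf_injective {W : Finset V} {σ τ : Fin W.card ≃ W}
    (h : wordOf W σ = wordOf W τ) : σ = τ := by
  apply Equiv.ext
  intro i
  apply Subtype.ext
  have := congrArg (fun l => l[(i : ℕ)]?) h
  simpa [wordOf, List.getElem?_map, List.getElem?_eq_getElem (by simp [i.isLt] : (i:ℕ) < (List.finRange W.card).length)] using this

/-- `Ψ` as a sum over words -/
lemma PsiG_eq_sum_LEW (W : Finset V) (E : Finset (V × V)) :
    PsiG W E = ∑ w ∈ LEW W E, psi w := by
  rw [PsiG]
  rw [← Finset.sum_filter]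
  rw [show LEW W E = Finset.image (wordOf W) (Finset.univ.filter (IsExt W E)) from ?_]
  · rw [Finset.sum_image (fun x _ y _ h => wordOf_injective h)]
  · ext w
    rw [Finset.mem_image]
    constructor
    · intro hw
      have h0 := mem_LEW.1 hw
      obtain ⟨h1, h2, h3⟩ := h0
      have hlen : w.length = W.card := by
        rw [← h2, List.toFinset_card_of_nodup h1]
      -- construct the equiv
      let eqv : Fin W.card ≃ {x // x ∈ w} :=
        (finCongr hlen.symm).trans (h1.getEquiv w)
      let eqv2 : {x // x ∈ w} ≃ W :=
        Equiv.subtypeEquivRight (fun x => by rw [← h2]; simp)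
      refine ⟨eqv.trans eqv2, ?_, ?_⟩
      · simp only [Finset.mem_filter, Finset.mem_univ, true_and]
        rw [isExt_iff_word]
        intro e he
        have hg : wordOf W (eqv.trans eqv2) = w := ?_
        · rw [hg]; exact h3 e he
        · apply List.ext_get (by simp [wordOf_length, hlen])
          intro i hi1 hi2
          have : (wordOf W (eqv.trans eqv2)).get ⟨i, hi1⟩ =
              ((eqv.trans eqv2) (Fin.cast (wordOf_length _) ⟨i, hi1⟩) : V) := wordOf_get _ _
          rw [this]
          simp [eqv, eqv2, List.Nodup.getEquiv]; rfl
      · apply List.ext_get (by simp [wordOf_length, hlen])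
        intro i hi1 hi2
        rw [wordOf_get]
        simp [eqv, eqv2, List.Nodup.getEquiv]; rfl
    · rintro ⟨σ, hσ, rfl⟩
      exact wordOf_mem_LEW (by simpa using hσ)

-- Part 9 : the chain forces the order of its vertices
lemma bef_of_mem_left {w₁ w₂ : List V} {x c : V} (hx : x ∈ w₁) :
    Bef (w₁ ++ c :: w₂) x c := by
  obtain ⟨s, t, rfl⟩ := List.append_of_mem hx
  exact ⟨s, t, w₂, by simp⟩

lemma chain_filter : ∀ (vs w : List V), w.Nodup → vs.Nodup →
    (∀ x ∈ vs, x ∈ w) → vs.Pairwise (Bef w) → mfil vs.toFinset w = vs := by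
  intro vs
  induction vs with
  | nil => intro w _ _ _ _; exact mfil_eq_nil (by simp)
  | cons c vs' ih =>
    intro w hw hvs hsub hpw
    have hc : c ∈ w := hsub c (by simp)
    obtain ⟨w₁, w₂, rfl⟩ := List.append_of_mem hc
    have hcw₁ : c ∉ w₁ := by
      intro hc1
      have := hw
      rw [List.nodup_append] at this
      exact this.2.2 _ hc1 _ (by simp) rfl
    have hcw₂ : c ∉ w₂ := by
      have := hw
      rw [List.nodup_append, List.nodup_cons] at this
      exact this.2.1.1
    have hbefc : ∀ x ∈ vs', Bef (w₁ ++ c :: w₂) c x := by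
      intro x hx
      rcases hpw with _ | ⟨hr, _⟩
      exact hr x hx
    have hvs'w₁ : ∀ x ∈ vs', x ∉ w₁ := by
      intro x hx hxw₁
      exact bef_antisymm hw (hbefc x hx) (bef_of_mem_left hxw₁)
    have hnil : mfil (c :: vs').toFinset w₁ = [] := by
      apply mfil_eq_nil
      intro x hxw₁ hxC
      simp at hxC
      rcases hxC with rfl | hx
      · exact hcw₁ hxw₁
      · exact hvs'w₁ x hx hxw₁
    have hvs'w₂ : ∀ x ∈ vs', x ∈ w₂ := by
      intro x hx
      have hxw := hsub x (by simp [hx])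
      have hxc : x ≠ c := by
        rintro rfl
        rcases hvs with _ | ⟨h1, _⟩
        exact h1 x hx rfl
      rcases List.mem_append.1 hxw with h | h
      · exact absurd h (hvs'w₁ x hx)
      · rcases List.mem_cons.1 h with h | h
        · exact absurd h hxc
        · exact h
    have hw₂ : w₂.Nodup := by
      rw [List.nodup_append, List.nodup_cons] at hw
      exact hw.2.1.2
    have hsubl : w₂.Sublist (w₁ ++ c :: w₂) :=
      ((List.sublist_cons_self c w₂).trans (List.sublist_append_right w₁ _))
    have hpw₂ : vs'.Pairwise (Bef w₂) := by
      rcases hpw with _ | ⟨_, hp⟩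
      refine hp.imp_of_mem ?_
      intro x y hx hy hxy
      have hxw₂ := hvs'w₂ x hx
      have hyw₂ := hvs'w₂ y hy
      have hne : x ≠ y := bef_ne hw hxy
      rcases bef_total hxw₂ hyw₂ hne with h | h
      · exact h
      · exact absurd (h.of_sublist hsubl) (bef_antisymm hw hxy)
    have hvs'nd : vs'.Nodup := hvs.of_cons
    have step : mfil (c :: vs').toFinset w₂ = mfil vs'.toFinset w₂ := by
      apply mfil_congr
      intro x hx
      have hxc : x ≠ c := fun h => hcw₂ (h ▸ hx)
      simp [hxc]
    rw [mfil_append, hnil, mfil_cons, if_pos (by simp), step,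
      ih w₂ hw₂ hvs'nd hvs'w₂ hpw₂]
    simp

/-- consecutive pairs of `vs` occur in `vs` in order -/
lemma bef_zip {vs : List V} {p : V × V} (hp : p ∈ vs.zip vs.tail) : Bef vs p.1 p.2 := by
  rw [List.mem_iff_getElem] at hp
  obtain ⟨i, hi, he⟩ := hp
  have hlen : (vs.zip vs.tail).length = vs.length - 1 := by
    simp [List.length_zip, List.length_tail]
  have hi1 : i + 1 < vs.length := by omega
  have hgz : (vs.zip vs.tail)[i] = (vs[i]'(by omega), vs.tail[i]'(by
      rw [List.length_tail]; omega)) := List.getElem_zip ..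
  have htl : vs.tail[i]'(by rw [List.length_tail]; omega) = vs[i+1]'hi1 := by
    rw [List.getElem_tail]
  rw [← he, hgz, htl]
  exact bef_get (i := ⟨i, by omega⟩) (j := ⟨i + 1, hi1⟩) (by simp)

lemma mem_of_zip_left {vs : List V} {p : V × V} (hp : p ∈ vs.zip vs.tail) : p.1 ∈ vs :=
  (List.of_mem_zip hp).1

lemma mem_of_zip_right {vs : List V} {p : V × V} (hp : p ∈ vs.zip vs.tail) : p.2 ∈ vs :=
  (List.tail_sublist vs).mem (List.of_mem_zip hp).2

lemma zip_tail_nodup {vs : List V} (h : vs.Nodup) : (vs.zip vs.tail).Nodup := by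
  apply List.Nodup.of_map Prod.snd
  rw [List.map_snd_zip (by simp [List.length_tail])]
  exact h.tail

-- Part 10 : two-block factorization
lemma psiG_two_block (P Q : Finset V) (E : Finset (V × V)) (vs : List V)
    (hvs_nd : vs.Nodup) (hvs_ne : vs ≠ [])
    (hPQ : P ∩ Q = vs.toFinset)
    (hedges : ∀ e ∈ E, (e.1 ∈ P ∧ e.2 ∈ P) ∨ (e.1 ∈ Q ∧ e.2 ∈ Q))
    (hchain : ∀ p ∈ vs.zip vs.tail, p ∈ E) :
    PsiG (P ∪ Q) E =
      PsiG P (E.filter (fun e => e.1 ∈ P ∧ e.2 ∈ P)) *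
      PsiG Q (E.filter (fun e => e.1 ∈ Q ∧ e.2 ∈ Q)) * DD vs := by
  classical
  have hCP : vs.toFinset ⊆ P := by rw [← hPQ]; exact Finset.inter_subset_left
  have hCQ : vs.toFinset ⊆ Q := by rw [← hPQ]; exact Finset.inter_subset_right
  set EP := E.filter (fun e => e.1 ∈ P ∧ e.2 ∈ P) with hEP
  set EQ := E.filter (fun e => e.1 ∈ Q ∧ e.2 ∈ Q) with hEQ
  rw [PsiG_eq_sum_LEW, PsiG_eq_sum_LEW, PsiG_eq_sum_LEW]
  -- facts about restriction
  have hrestr : ∀ w ∈ LEW (P ∪ Q) E, mfil P w ∈ LEW P EP ∧ mfil Q w ∈ LEW Q EQ := by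
    intro w hw
    rw [mem_LEW] at hw
    obtain ⟨h1, h2, h3⟩ := hw
    constructor
    · rw [mem_LEW]
      refine ⟨nodup_mfil h1, ?_, ?_⟩
      · ext x
        rw [List.mem_toFinset, mem_mfil, ← List.mem_toFinset, h2]
        constructor
        · rintro ⟨_, hx⟩; exact hx
        · intro hx; exact ⟨Finset.mem_union_left _ hx, hx⟩
      · intro e he
        rw [hEP, Finset.mem_filter] at he
        exact bef_mfil he.2.1 he.2.2 (h3 e he.1)
    · rw [mem_LEW]
      refine ⟨nodup_mfil h1, ?_, ?_⟩
      · ext x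
        rw [List.mem_toFinset, mem_mfil, ← List.mem_toFinset, h2]
        constructor
        · rintro ⟨_, hx⟩; exact hx
        · intro hx; exact ⟨Finset.mem_union_right _ hx, hx⟩
      · intro e he
        rw [hEQ, Finset.mem_filter] at he
        exact bef_mfil he.2.1 he.2.2 (h3 e he.1)
  -- the common word of an extension of a block is vs
  have hcommon : ∀ (T : Finset V) (F : Finset (V × V)), vs.toFinset ⊆ T →
      (∀ p ∈ vs.zip vs.tail, p ∈ F) → ∀ u ∈ LEW T F, mfil vs.toFinset u = vs := by
    intro T F hsub hch u hu
    rw [mem_LEW] at hu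
    obtain ⟨h1, h2, h3⟩ := hu
    apply chain_filter vs u h1 hvs_nd
    · intro x hx
      rw [← List.mem_toFinset, h2] at *
      exact hsub (by simpa using hx)
    · -- pairwise Bef
      haveI : IsTrans V (Bef u) := ⟨fun x y z hxy hyz => bef_trans h1 hxy hyz⟩
      rw [← List.isChain_iff_pairwise]
      rw [List.isChain_iff_getElem]
      intro i hi
      have hpz : (vs.get ⟨i, by omega⟩, vs.get ⟨i + 1, by omega⟩) ∈ vs.zip vs.tail := by
        rw [List.mem_iff_getElem]
        refine ⟨i, by simp [List.length_zip, List.length_tail]; omega, ?_⟩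
        rw [List.getElem_zip]
        simp [List.getElem_tail]
      exact h3 _ (hch _ hpz)
  have hchP : ∀ p ∈ vs.zip vs.tail, p ∈ EP := by
    intro p hp
    rw [hEP, Finset.mem_filter]
    exact ⟨hchain p hp, hCP (by simpa using mem_of_zip_left hp),
      hCP (by simpa using mem_of_zip_right hp)⟩
  have hchQ : ∀ p ∈ vs.zip vs.tail, p ∈ EQ := by
    intro p hp
    rw [hEQ, Finset.mem_filter]
    exact ⟨hchain p hp, hCQ (by simpa using mem_of_zip_left hp),
      hCQ (by simpa using mem_of_zip_right hp)⟩
  -- group the sum over extensions by their restrictions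
  rw [Finset.sum_mul_sum]
  have key : ∀ u ∈ LEW P EP, ∀ v ∈ LEW Q EQ,
      (LEW (P ∪ Q) E).filter (fun w => mfil P w = u ∧ mfil Q w = v) = amalg u v := by
    intro u hu v hv
    have hut : u.toFinset = P := (mem_LEW.1 hu).2.1
    have hvt : v.toFinset = Q := (mem_LEW.1 hv).2.1
    have hund : u.Nodup := (mem_LEW.1 hu).1
    have hvnd : v.Nodup := (mem_LEW.1 hv).1
    ext w
    rw [Finset.mem_filter, mem_amalg, mem_LEW, hut, hvt]
    constructor
    · rintro ⟨⟨h1, h2, h3⟩, h4, h5⟩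
      exact ⟨h1, h2, h4, h5⟩
    · rintro ⟨h1, h2, h3, h4⟩
      refine ⟨⟨h1, h2, ?_⟩, h3, h4⟩
      intro e he
      rcases hedges e he with ⟨he1, he2⟩ | ⟨he1, he2⟩
      · have : Bef u e.1 e.2 := (mem_LEW.1 hu).2.2 e (by
          rw [hEP, Finset.mem_filter]; exact ⟨he, he1, he2⟩)
        rw [← h3] at this
        exact this.of_sublist (mfil_sublist _ _)
      · have : Bef v e.1 e.2 := (mem_LEW.1 hv).2.2 e (by
          rw [hEQ, Finset.mem_filter]; exact ⟨he, he1, he2⟩)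
        rw [← h4] at this
        exact this.of_sublist (mfil_sublist _ _)
  rw [← Finset.sum_product']
  rw [← Finset.sum_fiberwise_of_maps_to (g := fun w => (mfil P w, mfil Q w))
    (t := (LEW P EP) ×ˢ (LEW Q EQ))
    (fun w hw => Finset.mk_mem_product (hrestr w hw).1 (hrestr w hw).2)]
  rw [Finset.sum_mul]
  apply Finset.sum_congr rfl
  intro p hp
  rw [Finset.mem_product] at hp
  obtain ⟨hu, hv⟩ := hp
  have hfib : (LEW (P ∪ Q) E).filter (fun w => (mfil P w, mfil Q w) = p) =
      amalg p.1 p.2 := by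
    rw [← key p.1 hu p.2 hv]
    apply Finset.filter_congr
    intro w _
    simp [Prod.ext_iff]
  rw [hfib]
  -- apply the amalgamation identity
  have hut : p.1.toFinset = P := (mem_LEW.1 hu).2.1
  have hvt : p.2.toFinset = Q := (mem_LEW.1 hv).2.1
  have hund : p.1.Nodup := (mem_LEW.1 hu).1
  have hvnd : p.2.Nodup := (mem_LEW.1 hv).1
  have hcomm1 : mfil p.2.toFinset p.1 = vs := by
    rw [hvt]
    rw [show mfil Q p.1 = mfil vs.toFinset p.1 from mfil_congr (fun x hx => by
      have hxP : x ∈ P := by rw [← hut]; simp [hx]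
      rw [← hPQ]
      simp [hxP])]
    exact hcommon P EP hCP hchP p.1 hu
  have hcomm2 : mfil p.1.toFinset p.2 = vs := by
    rw [hut]
    rw [show mfil P p.2 = mfil vs.toFinset p.2 from mfil_congr (fun x hx => by
      have hxQ : x ∈ Q := by rw [← hvt]; simp [hx]
      rw [← hPQ]
      simp [hxQ])]
    exact hcommon Q EQ hCQ hchQ p.2 hv
  rw [Ulemma hund hvnd (by rw [hcomm1, hcomm2]) (by rw [hcomm1]; exact hvs_ne), hcomm1]

lemma NG_two_block (P Q : Finset V) (E : Finset (V × V)) (vs : List V)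
    (hvs_nd : vs.Nodup) (hvs_ne : vs ≠ [])
    (hPQ : P ∩ Q = vs.toFinset)
    (hedges : ∀ e ∈ E, (e.1 ∈ P ∧ e.2 ∈ P) ∨ (e.1 ∈ Q ∧ e.2 ∈ Q))
    (hchain : ∀ p ∈ vs.zip vs.tail, p ∈ E)
    (hCint : ∀ e ∈ E, e.1 ∈ vs.toFinset → e.2 ∈ vs.toFinset →
      e ∈ (vs.zip vs.tail).toFinset) :
    NG (P ∪ Q) E =
      NG P (E.filter (fun e => e.1 ∈ P ∧ e.2 ∈ P)) *
      NG Q (E.filter (fun e => e.1 ∈ Q ∧ e.2 ∈ Q)) := by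
  classical
  have hCP : vs.toFinset ⊆ P := by rw [← hPQ]; exact Finset.inter_subset_left
  have hCQ : vs.toFinset ⊆ Q := by rw [← hPQ]; exact Finset.inter_subset_right
  have hunion : E.filter (fun e => e.1 ∈ P ∧ e.2 ∈ P) ∪
      E.filter (fun e => e.1 ∈ Q ∧ e.2 ∈ Q) = E := by
    ext e
    simp only [Finset.mem_union, Finset.mem_filter]
    constructor
    · rintro (⟨h, _⟩ | ⟨h, _⟩) <;> exact h
    · intro he
      rcases hedges e he with h | h
      · exact Or.inl ⟨he, h⟩
      · exact Or.inr ⟨he, h⟩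
  have hinter : E.filter (fun e => e.1 ∈ P ∧ e.2 ∈ P) ∩
      E.filter (fun e => e.1 ∈ Q ∧ e.2 ∈ Q) = (vs.zip vs.tail).toFinset := by
    ext e
    simp only [Finset.mem_inter, Finset.mem_filter]
    constructor
    · rintro ⟨⟨he, h1P, h2P⟩, _, h1Q, h2Q⟩
      exact hCint e he (by rw [← hPQ]; exact Finset.mem_inter.2 ⟨h1P, h1Q⟩)
        (by rw [← hPQ]; exact Finset.mem_inter.2 ⟨h2P, h2Q⟩)
    · intro he
      rw [List.mem_toFinset] at he
      have h1 : e.1 ∈ vs.toFinset := by simpa using mem_of_zip_left he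
      have h2 : e.2 ∈ vs.toFinset := by simpa using mem_of_zip_right he
      exact ⟨⟨hchain e he, hCP h1, hCP h2⟩, hchain e he, hCQ h1, hCQ h2⟩
  have hprod : (∏ e ∈ E.filter (fun e => e.1 ∈ P ∧ e.2 ∈ P), (xv e.1 - xv e.2)) *
      (∏ e ∈ E.filter (fun e => e.1 ∈ Q ∧ e.2 ∈ Q), (xv e.1 - xv e.2)) =
      (∏ e ∈ E, (xv e.1 - xv e.2)) * DD vs := by
    rw [← Finset.prod_union_inter, hunion, hinter]
    congr 1
    rw [DD, List.prod_toFinset _ (zip_tail_nodup hvs_nd)]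
  rw [NG, NG, NG, psiG_two_block P Q E vs hvs_nd hvs_ne hPQ hedges hchain]
  calc PsiG P (E.filter (fun e => e.1 ∈ P ∧ e.2 ∈ P)) *
      PsiG Q (E.filter (fun e => e.1 ∈ Q ∧ e.2 ∈ Q)) * DD vs *
      ∏ e ∈ E, (xv e.1 - xv e.2)
      = PsiG P (E.filter (fun e => e.1 ∈ P ∧ e.2 ∈ P)) *
        PsiG Q (E.filter (fun e => e.1 ∈ Q ∧ e.2 ∈ Q)) *
        ((∏ e ∈ E, (xv e.1 - xv e.2)) * DD vs) := by ring
    _ = _ := by rw [← hprod]; ring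

-- Part 11 : chain base case, main induction
lemma NG_chain (vs : List V) (hne : vs ≠ []) (hnd : vs.Nodup) :
    NG vs.toFinset ((vs.zip vs.tail).toFinset) = 1 := by
  have hLEW : LEW vs.toFinset (vs.zip vs.tail).toFinset = {vs} := by
    ext w
    rw [mem_LEW, Finset.mem_singleton]
    constructor
    · rintro ⟨h1, h2, h3⟩
      have hpw : vs.Pairwise (Bef w) := by
        haveI : IsTrans V (Bef w) := ⟨fun x y z hxy hyz => bef_trans h1 hxy hyz⟩
        rw [← List.isChain_iff_pairwise]
        rw [List.isChain_iff_getElem]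
        intro i hi
        have hpz : (vs.get ⟨i, by omega⟩, vs.get ⟨i + 1, by omega⟩) ∈ vs.zip vs.tail := by
          rw [List.mem_iff_getElem]
          refine ⟨i, by simp [List.length_zip, List.length_tail]; omega, ?_⟩
          rw [List.getElem_zip]
          simp [List.getElem_tail]
        exact h3 _ (by simpa using hpz)
      have hfil : mfil vs.toFinset w = vs := chain_filter vs w h1 hnd
        (fun x hx => by
          rw [← List.mem_toFinset, h2]
          simpa using hx) hpw
      rw [mfil_eq_self (fun x hx => by rw [← h2]; simp [hx])] at hfil
      exact hfil
    · rintro rfl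
      exact ⟨hnd, rfl, fun e he => bef_zip (by simpa using he)⟩
  rw [NG, PsiG_eq_sum_LEW, hLEW, Finset.sum_singleton,
    List.prod_toFinset _ (zip_tail_nodup hnd)]
  exact psi_mul_DD hnd

set_option maxHeartbeats 1000000 in
lemma main_induction : ∀ (k : ℕ) (W : Finset V) [Fintype V] (E : Finset (V × V))
    (S : Fin k → Finset V) (vs : List V), vs ≠ [] → vs.Nodup →
    (∀ p ∈ vs.zip vs.tail, p ∈ E) →
    (∀ e ∈ E, e.1 ∈ vs.toFinset → e.2 ∈ vs.toFinset → e ∈ (vs.zip vs.tail).toFinset) →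
    (∀ e ∈ E, e.1 ∈ W ∧ e.2 ∈ W) →
    vs.toFinset ⊆ W →
    (∀ i j, i ≠ j → Disjoint (S i) (S j)) →
    (∀ i, Disjoint (S i) vs.toFinset) →
    (W \ vs.toFinset = Finset.univ.biUnion S) →
    (∀ e ∈ E, ∀ i, (e.1 ∈ S i → e.2 ∈ S i ∪ vs.toFinset) ∧
      (e.2 ∈ S i → e.1 ∈ S i ∪ vs.toFinset)) →
    NG W E = ∏ i, NG (S i ∪ vs.toFinset)
      (E.filter fun e => e.1 ∈ S i ∪ vs.toFinset ∧ e.2 ∈ S i ∪ vs.toFinset) := by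
  intro k
  induction k with
  | zero =>
    intro W _ E S vs hne hnd hch hCint hEW hCW hdisj hSC hcov hcross
    have hWC : W = vs.toFinset := by
      have h0 : W \ vs.toFinset = ∅ := by rw [hcov]; simp
      exact Finset.Subset.antisymm (Finset.sdiff_eq_empty_iff_subset.1 h0) hCW
    have hE : E = (vs.zip vs.tail).toFinset := by
      ext e
      constructor
      · intro he
        have h1 := (hEW e he).1
        have h2 := (hEW e he).2
        rw [hWC] at h1 h2
        exact hCint e he h1 h2
      · intro he
        exact hch e (by simpa using he)
    rw [hWC, hE, NG_chain vs hne hnd]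
    simp
  | succ k ih =>
    intro W _ E S vs hne hnd hch hCint hEW hCW hdisj hSC hcov hcross
    have hSW : ∀ i, S i ⊆ W := by
      intro i x hx
      have : x ∈ W \ vs.toFinset := by
        rw [hcov]
        exact Finset.mem_biUnion.2 ⟨i, Finset.mem_univ _, hx⟩
      exact (Finset.mem_sdiff.1 this).1
    have hWdec : ∀ x ∈ W, x ∈ vs.toFinset ∨ ∃ i, x ∈ S i := by
      intro x hx
      by_cases hxC : x ∈ vs.toFinset
      · exact Or.inl hxC
      · right
        have : x ∈ W \ vs.toFinset := Finset.mem_sdiff.2 ⟨hx, hxC⟩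
        rw [hcov] at this
        obtain ⟨i, _, hi⟩ := Finset.mem_biUnion.1 this
        exact ⟨i, hi⟩
    have hPQunion : (S (Fin.last k) ∪ vs.toFinset) ∪
        ((Finset.univ.biUnion fun j : Fin k => S j.castSucc) ∪ vs.toFinset) = W := by
      ext x
      simp only [Finset.mem_union, Finset.mem_biUnion, Finset.mem_univ, true_and]
      constructor
      · rintro ((h | h) | (⟨j, hj⟩ | h))
        · exact hSW _ h
        · exact hCW h
        · exact hSW _ hj
        · exact hCW h
      · intro hx
        rcases hWdec x hx with h | ⟨i, hi⟩
        · exact Or.inl (Or.inr h)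
        · rcases Fin.eq_castSucc_or_eq_last i with ⟨j, rfl⟩ | rfl
          · exact Or.inr (Or.inl ⟨j, hi⟩)
          · exact Or.inl (Or.inl hi)
    have hPQinter : (S (Fin.last k) ∪ vs.toFinset) ∩
        ((Finset.univ.biUnion fun j : Fin k => S j.castSucc) ∪ vs.toFinset)
        = vs.toFinset := by
      ext x
      simp only [Finset.mem_inter, Finset.mem_union, Finset.mem_biUnion, Finset.mem_univ,
        true_and]
      constructor
      · rintro ⟨h1 | h1, h2 | h2⟩
        · obtain ⟨j, hj⟩ := h2
          exact absurd (Finset.mem_inter.2 ⟨h1, hj⟩)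
            (by rw [Finset.disjoint_iff_inter_eq_empty.1
              (hdisj _ _ (Fin.ne_last_of_lt (Fin.castSucc_lt_last j)).symm)]; simp)
        · exact absurd (Finset.mem_inter.2 ⟨h1, h2⟩)
            (by rw [Finset.disjoint_iff_inter_eq_empty.1 (hSC (Fin.last k))]; simp)
        · exact h1
        · exact h1
      · intro h
        exact ⟨Or.inr h, Or.inr h⟩
    have hedges2 : ∀ e ∈ E,
        (e.1 ∈ S (Fin.last k) ∪ vs.toFinset ∧ e.2 ∈ S (Fin.last k) ∪ vs.toFinset) ∨
        (e.1 ∈ (Finset.univ.biUnion fun j : Fin k => S j.castSucc) ∪ vs.toFinset ∧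
         e.2 ∈ (Finset.univ.biUnion fun j : Fin k => S j.castSucc) ∪ vs.toFinset) := by
      intro e he
      have hmem : ∀ i, ∀ x, x ∈ S i ∪ vs.toFinset →
          (i = Fin.last k → x ∈ S (Fin.last k) ∪ vs.toFinset) := by
        intro i x hx hi
        rw [← hi]; exact hx
      rcases hWdec e.1 (hEW e he).1 with h1 | ⟨i, h1⟩
      · rcases hWdec e.2 (hEW e he).2 with h2 | ⟨i, h2⟩
        · exact Or.inl ⟨Finset.mem_union_right _ h1, Finset.mem_union_right _ h2⟩
        · have := ((hcross e he i).2 h2)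
          rcases Fin.eq_castSucc_or_eq_last i with ⟨j, rfl⟩ | rfl
          · refine Or.inr ⟨Finset.mem_union_right _ h1, Finset.mem_union_left _ ?_⟩
            exact Finset.mem_biUnion.2 ⟨j, Finset.mem_univ _, h2⟩
          · exact Or.inl ⟨Finset.mem_union_right _ h1, Finset.mem_union_left _ h2⟩
      · have h2 := (hcross e he i).1 h1
        rcases Fin.eq_castSucc_or_eq_last i with ⟨j, rfl⟩ | rfl
        · refine Or.inr ⟨Finset.mem_union_left _
            (Finset.mem_biUnion.2 ⟨j, Finset.mem_univ _, h1⟩), ?_⟩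
          rcases Finset.mem_union.1 h2 with h | h
          · exact Finset.mem_union_left _ (Finset.mem_biUnion.2 ⟨j, Finset.mem_univ _, h⟩)
          · exact Finset.mem_union_right _ h
        · exact Or.inl ⟨Finset.mem_union_left _ h1, h2⟩
    rw [← hPQunion, NG_two_block _ _ E vs hnd hne hPQinter hedges2 hch hCint,
      Fin.prod_univ_castSucc]
    have hQsub : ∀ j : Fin k, S j.castSucc ∪ vs.toFinset ⊆
        (Finset.univ.biUnion fun j : Fin k => S j.castSucc) ∪ vs.toFinset := by
      intro j x hx
      rcases Finset.mem_union.1 hx with h | h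
      · exact Finset.mem_union_left _ (Finset.mem_biUnion.2 ⟨j, Finset.mem_univ _, h⟩)
      · exact Finset.mem_union_right _ h
    have hIH := ih ((Finset.univ.biUnion fun j : Fin k => S j.castSucc) ∪ vs.toFinset)
      (E.filter (fun e =>
        e.1 ∈ (Finset.univ.biUnion fun j : Fin k => S j.castSucc) ∪ vs.toFinset ∧
        e.2 ∈ (Finset.univ.biUnion fun j : Fin k => S j.castSucc) ∪ vs.toFinset))
      (fun j => S j.castSucc) vs hne hnd
      (fun p hp => Finset.mem_filter.2 ⟨hch p hp,
        Finset.mem_union_right _ (by simpa using mem_of_zip_left hp),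
        Finset.mem_union_right _ (by simpa using mem_of_zip_right hp)⟩)
      (fun e he => hCint e (Finset.mem_filter.1 he).1)
      (fun e he => (Finset.mem_filter.1 he).2)
      Finset.subset_union_right
      (fun i j hij => hdisj _ _ (fun h => hij (Fin.castSucc_injective _ h)))
      (fun i => hSC _)
      (by
        ext x
        simp only [Finset.mem_sdiff, Finset.mem_union, Finset.mem_biUnion, Finset.mem_univ,
          true_and]
        constructor
        · rintro ⟨⟨j, hj⟩ | h, hxC⟩
          · exact ⟨j, hj⟩
          · exact absurd h hxC
        · rintro ⟨j, hj⟩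
          have hxC : x ∉ vs.toFinset := fun hc =>
            (Finset.disjoint_left.1 (hSC j.castSucc)) hj hc
          exact ⟨Or.inl ⟨j, hj⟩, hxC⟩)
      (fun e he i => hcross e (Finset.mem_filter.1 he).1 i.castSucc)
    rw [hIH]
    rw [mul_comm]
    congr 1
    apply Finset.prod_congr rfl
    intro j _
    congr 1
    ext e
    simp only [Finset.mem_filter]
    constructor
    · rintro ⟨⟨he, _, _⟩, h1, h2⟩
      exact ⟨he, h1, h2⟩
    · rintro ⟨he, h1, h2⟩
      exact ⟨⟨he, hQsub j h1, hQsub j h2⟩, h1, h2⟩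

-- Part 12 : transitive chains and final assembly helpers
lemma zip_index {vs : List V} {p : V × V} (hp : p ∈ vs.zip vs.tail) :
    ∃ i, ∃ h : i + 1 < vs.length, p = (vs[i], vs[i + 1]) := by
  rw [List.mem_iff_getElem] at hp
  obtain ⟨i, hi, he⟩ := hp
  have hlen : i + 1 < vs.length := by
    simp [List.length_zip, List.length_tail] at hi; omega
  refine ⟨i, hlen, ?_⟩
  rw [← he, List.getElem_zip]
  simp [List.getElem_tail]

lemma pair_mem_zip {vs : List V} {i : ℕ} (h : i + 1 < vs.length) :
    (vs[i], vs[i + 1]) ∈ vs.zip vs.tail := by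
  rw [List.mem_iff_getElem]
  refine ⟨i, by simp [List.length_zip, List.length_tail]; omega, ?_⟩
  rw [List.getElem_zip]
  simp [List.getElem_tail]

lemma chain_transgen {E : Finset (V × V)} {vs : List V}
    (hchain : List.Chain' (fun a b => (a, b) ∈ E) vs) :
    ∀ j, ∀ hj : j < vs.length, ∀ i, ∀ hij : i < j,
      Relation.TransGen (fun a b => (a, b) ∈ E) (vs[i]'(lt_trans hij hj)) (vs[j]'hj) := by
  intro j
  induction j with
  | zero => intro _ i h; omega
  | succ j ihj =>
    intro hj i hij
    have hstep : (vs[j], vs[j + 1]) ∈ E := by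
      have := List.isChain_iff_getElem.1 hchain j (by omega)
      simpa using this
    rcases Nat.lt_succ_iff_lt_or_eq.1 hij with h | h
    · exact (ihj (by omega) i h).tail hstep
    · subst h
      exact Relation.TransGen.single hstep


/-- chain factorization.  If the vertex set of a chain `vs` of `G`
disconnects `G` into components `S 0, …, S (k-1)`, then `N(G)` is the product of
the `N` of the corresponding regions (induced subgraphs on `S i ∪ V_c`). -/
theorem chain_factorization (V : Type) [Fintype V] [DecidableEq V]
    (E : Finset (V × V)) (hacyc : Acyclic E) (hconn : (undirected E).Connected)
    (htrans : ∀ e ∈ E, ∀ m : V,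
      ¬ (Relation.TransGen (fun a b => (a, b) ∈ E) e.1 m ∧
          Relation.TransGen (fun a b => (a, b) ∈ E) m e.2))
    (vs : List V) (hne : vs ≠ []) (hnd : vs.Nodup)
    (hchain : List.Chain' (fun a b => (a, b) ∈ E) vs)
    (k : ℕ) (S : Fin k → Finset V)
    (hdisj : ∀ i j, i ≠ j → Disjoint (S i) (S j))
    (hcover : Finset.univ.biUnion S = Finset.univ \ vs.toFinset)
    (hSne : ∀ i, (S i).Nonempty)
    (hSconn : ∀ i, (SimpleGraph.induce (↑(S i) : Set V) (undirected E)).Connected)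
    (hcross : ∀ e ∈ E, ∀ i,
      (e.1 ∈ S i → e.2 ∈ S i ∪ vs.toFinset) ∧ (e.2 ∈ S i → e.1 ∈ S i ∪ vs.toFinset)) :
    NG (Finset.univ : Finset V) E =
      ∏ i : Fin k,
        NG (S i ∪ vs.toFinset)
          (E.filter fun e => e.1 ∈ S i ∪ vs.toFinset ∧ e.2 ∈ S i ∪ vs.toFinset) := by
  apply main_induction k Finset.univ E S vs hne hnd
  · -- chain pairs are edges
    intro p hp
    obtain ⟨i, hi, rfl⟩ := zip_index hp
    have := List.isChain_iff_getElem.1 hchain i (by omega)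
    simpa using this
  · -- edges inside the chain are consecutive
    intro e he h1 h2
    have he' : (e.1, e.2) ∈ E := by simpa using he
    obtain ⟨i, hi, hei⟩ := List.mem_iff_getElem.1 (List.mem_toFinset.1 h1)
    obtain ⟨j, hj, hej⟩ := List.mem_iff_getElem.1 (List.mem_toFinset.1 h2)
    rcases lt_trichotomy i j with hij | hij | hij
    · by_cases hj1 : j = i + 1
      · subst hj1
        rw [List.mem_toFinset]
        have := pair_mem_zip (vs := vs) (i := i) (by omega)
        rw [hei, hej] at this
        simpa using this
      · exfalso
        have hi1 : i + 1 < vs.length := by omega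
        have t1 : Relation.TransGen (fun a b => (a, b) ∈ E) e.1 vs[i + 1] := by
          apply Relation.TransGen.single
          rw [← hei]
          have := List.isChain_iff_getElem.1 hchain i (by omega)
          simpa using this
        have t2 : Relation.TransGen (fun a b => (a, b) ∈ E) vs[i + 1] e.2 := by
          rw [← hej]
          exact chain_transgen hchain j hj (i + 1) (by omega)
        exact htrans e he vs[i + 1] ⟨t1, t2⟩
    · exfalso
      subst hij
      have heq : e.1 = e.2 := by rw [← hei, ← hej]
      exact hacyc e.1 (Relation.TransGen.single (by rw [heq] at he' ⊢; exact he'))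
    · exfalso
      have t1 : Relation.TransGen (fun a b => (a, b) ∈ E) e.2 e.1 := by
        rw [← hei, ← hej]
        exact chain_transgen hchain i hi j hij
      exact hacyc e.1 ((Relation.TransGen.single he').trans t1)
  · intro e _; exact ⟨Finset.mem_univ _, Finset.mem_univ _⟩
  · exact Finset.subset_univ _
  · exact hdisj
  · -- each block is disjoint from the chain
    intro i
    rw [Finset.disjoint_left]
    intro x hx hxC
    have : x ∈ Finset.univ \ vs.toFinset := by
      rw [← hcover]
      exact Finset.mem_biUnion.2 ⟨i, Finset.mem_univ _, hx⟩
    exact (Finset.mem_sdiff.1 this).2 hxC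
  · rw [hcover]
  · exact hcross
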